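/- Every finite connected graph Γ that contains a subgraph isomorphic to D₅ and is not isomorphic to K₅ satisfies the strict inequality 5·Υ_v(D₅,Γ) > Υ_v^{sym}(D₅,Γ). Consequently, D₅ is not vertex-expensive in the class of connected graphs. -/

import Mathlib

open SimpleGraph

/-- The graph `D₅`: a triangle on vertices 0,1,2 with pendant vertices 3 (adjacent to 1)
and 4 (adjacent to 2). -/
def D5 : SimpleGraph (Fin 5) :=
  SimpleGraph.fromRel (fun a b =>
    (a, b) ∈ ({(0, 1), (1, 2), (0, 2), (1, 3), (2, 4)} : Set (Fin 5 × Fin 5)))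

/-- `f` is an embedded copy of the graph `K` in the graph `Γ` (a subgraph isomorphic to `K`). -/
def IsCopy {W V : Type*} (K : SimpleGraph W) (Γ : SimpleGraph V) (f : W → V) : Prop :=
  Function.Injective f ∧ ∀ a b, K.Adj a b → Γ.Adj (f a) (f b)

/-- `X` meets every subgraph of `Γ` isomorphic to `K`. -/
def IsTransversal {W V : Type*} (K : SimpleGraph W) (Γ : SimpleGraph V) (X : Set V) : Prop :=
  ∀ f : W → V, IsCopy K Γ f → ∃ a, f a ∈ X

/-- `X` is invariant under all automorphisms of `Γ`. -/
def GraphInvariant {V : Type*} (Γ : SimpleGraph V) (X : Set V) : Prop :=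
  ∀ σ : Γ ≃g Γ, (fun v => σ v) '' X = X

/-- The vertex representability `Υ_v(K, Γ)`. -/
noncomputable def upsilon {W V : Type*} (K : SimpleGraph W) (Γ : SimpleGraph V) : ℕ :=
  sInf {n | ∃ X : Set V, X.Finite ∧ X.ncard = n ∧ IsTransversal K Γ X}

/-- The symmetric vertex representability `Υ_v^sym(K, Γ)`. -/
noncomputable def upsilonSym {W V : Type*} (K : SimpleGraph W) (Γ : SimpleGraph V) : ℕ :=
  sInf {n | ∃ X : Set V, X.Finite ∧ X.ncard = n ∧ IsTransversal K Γ X ∧ GraphInvariant Γ X}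

/-- The orbit of a vertex under the automorphism group of `Γ`. -/
def orb {V : Type*} (Γ : SimpleGraph V) (v : V) : Set V := {w | ∃ σ : Γ ≃g Γ, σ v = w}

open Finset

section ups
variable {V : Type*} {Γ : SimpleGraph V} {K : SimpleGraph (Fin 5)}

lemma upsilon_le {X : Set V} (hfin : X.Finite) (ht : IsTransversal K Γ X) :
    upsilon K Γ ≤ X.ncard := Nat.sInf_le ⟨X, hfin, rfl, ht⟩

lemma upsilonSym_le {X : Set V} (hfin : X.Finite) (ht : IsTransversal K Γ X)
    (hinv : GraphInvariant Γ X) : upsilonSym K Γ ≤ X.ncard := Nat.sInf_le ⟨X, hfin, rfl, ht, hinv⟩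

lemma upsilon_spec [Finite V] :
    ∃ X : Set V, X.Finite ∧ X.ncard = upsilon K Γ ∧ IsTransversal K Γ X := by
  have hne : {n | ∃ X : Set V, X.Finite ∧ X.ncard = n ∧ IsTransversal K Γ X}.Nonempty :=
    ⟨(Set.univ : Set V).ncard, ⟨Set.univ, Set.finite_univ, rfl, fun f _ => ⟨0, trivial⟩⟩⟩
  obtain ⟨X, h1, h2, h3⟩ := Nat.sInf_mem hne
  exact ⟨X, h1, h2, h3⟩

end ups

lemma copy_comp {V : Type*} {Γ : SimpleGraph V} {f : Fin 5 → V} (σ : Γ ≃g Γ)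
    (hf : IsCopy D5 Γ f) : IsCopy D5 Γ (fun i => σ (f i)) :=
  ⟨fun _ _ h => hf.1 (σ.injective h), fun _ _ h => σ.map_adj_iff.mpr (hf.2 _ _ h)⟩

lemma autFinite {V : Type} [Finite V] (Γ : SimpleGraph V) : Finite (Γ ≃g Γ) := by
  classical
  have : Fintype V := Fintype.ofFinite V
  exact Finite.of_injective (fun σ => (σ : V ≃ V)) (fun a b h => RelIso.ext (fun x => congrArg (fun e : V ≃ V => e x) h))
lemma d5_adj_iff (a b : Fin 5) : D5.Adj a b ↔ a ≠ b ∧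
    ((a,b) ∈ ({(0, 1), (1, 2), (0, 2), (1, 3), (2, 4)} : Set (Fin 5 × Fin 5)) ∨
     (b,a) ∈ ({(0, 1), (1, 2), (0, 2), (1, 3), (2, 4)} : Set (Fin 5 × Fin 5))) := by
  simp [D5, SimpleGraph.fromRel_adj]

lemma mkCopy {V : Type*} {Γ : SimpleGraph V} {a b c d e : V}
    (hab : Γ.Adj a b) (hac : Γ.Adj a c) (hbc : Γ.Adj b c) (hbd : Γ.Adj b d) (hce : Γ.Adj c e)
    (had : a ≠ d) (hae : a ≠ e) (hcd : c ≠ d) (hbe : b ≠ e) (hde : d ≠ e) :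
    IsCopy D5 Γ ![a,b,c,d,e] := by
  have hab' : a ≠ b := hab.ne
  have hac' : a ≠ c := hac.ne
  have hbc' : b ≠ c := hbc.ne
  have hbd' : b ≠ d := hbd.ne
  have hce' : c ≠ e := hce.ne
  constructor
  · intro i j hij
    fin_cases i <;> fin_cases j <;> simp_all <;> simp_all [eq_comm]
  · intro i j hij
    rw [d5_adj_iff] at hij
    obtain ⟨hne, h | h⟩ := hij <;>
      simp only [Set.mem_insert_iff, Set.mem_singleton_iff, Prod.mk.injEq] at h <;>
      rcases h with ⟨h1,h2⟩|⟨h1,h2⟩|⟨h1,h2⟩|⟨h1,h2⟩|⟨h1,h2⟩ <;> subst h1 <;> subst h2 <;>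
      simp [Matrix.cons_val_zero, Matrix.cons_val_one] <;>
      first
      | exact hab | exact hac | exact hbc | exact hbd | exact hce
      | exact hab.symm | exact hac.symm | exact hbc.symm | exact hbd.symm | exact hce.symm

lemma d5adj01 : D5.Adj 0 1 := by rw [d5_adj_iff]; exact ⟨by decide, Or.inl (by simp)⟩
lemma d5adj02 : D5.Adj 0 2 := by rw [d5_adj_iff]; exact ⟨by decide, Or.inl (by simp)⟩
lemma d5adj12 : D5.Adj 1 2 := by rw [d5_adj_iff]; exact ⟨by decide, Or.inl (by simp)⟩
lemma d5adj13 : D5.Adj 1 3 := by rw [d5_adj_iff]; exact ⟨by decide, Or.inl (by simp)⟩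
lemma d5adj24 : D5.Adj 2 4 := by rw [d5_adj_iff]; exact ⟨by decide, Or.inl (by simp)⟩

section structural
variable {V : Type} {Γ : SimpleGraph V} {X Y : Set V}

lemma copy_unpack {f : Fin 5 → V} (hf : IsCopy D5 Γ f) :
    Γ.Adj (f 0) (f 1) ∧ Γ.Adj (f 0) (f 2) ∧ Γ.Adj (f 1) (f 2) ∧ Γ.Adj (f 1) (f 3) ∧
      Γ.Adj (f 2) (f 4) :=
  ⟨hf.2 _ _ d5adj01, hf.2 _ _ d5adj02, hf.2 _ _ d5adj12, hf.2 _ _ d5adj13, hf.2 _ _ d5adj24⟩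

lemma copy_ne {f : Fin 5 → V} (hf : IsCopy D5 Γ f) :
    ∀ i j : Fin 5, i ≠ j → f i ≠ f j := fun _ _ hij h => hij (hf.1 h)

structure Ctx (Γ : SimpleGraph V) (X Y : Set V) : Prop where
  h1 : ∀ f : Fin 5 → V, IsCopy D5 Γ f → ∃ i, f i ∈ X
  h2 : ∀ f : Fin 5 → V, IsCopy D5 Γ f → ∀ i j : Fin 5, f i ∈ X → f j ∈ X → i = j
  h3 : ∀ f : Fin 5 → V, IsCopy D5 Γ f → ∀ i, f i ∈ Y
  h4 : ∀ v ∈ Y, ∃ f : Fin 5 → V, IsCopy D5 Γ f ∧ f 0 = v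
  h5 : ∀ v ∈ Y, ∃ σ : Γ ≃g Γ, σ v ∈ X

lemma h1_tuple (ctx : Ctx Γ X Y) {a b c d e : V} (h : IsCopy D5 Γ ![a,b,c,d,e]) :
    a ∈ X ∨ b ∈ X ∨ c ∈ X ∨ d ∈ X ∨ e ∈ X := by
  obtain ⟨i, hi⟩ := ctx.h1 _ h
  fin_cases i <;> simp only [Matrix.cons_val_zero, Matrix.cons_val_one, Matrix.head_cons,
    Matrix.cons_val_two, Matrix.tail_cons, Matrix.cons_val_three, Matrix.cons_val_four,
    Matrix.cons_val_fin_one, Fin.isValue] at hi <;> tauto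

lemma key1 (ctx : Ctx Γ X Y) {a b c d e : V}
    (hab : Γ.Adj a b) (hac : Γ.Adj a c) (hbc : Γ.Adj b c) (hbd : Γ.Adj b d) (hce : Γ.Adj c e)
    (had : a ≠ d) (hae : a ≠ e) (hcd : c ≠ d) (hbe : b ≠ e) (hde : d ≠ e) :
    ∀ u, Γ.Adj a u → u = b ∨ u = c ∨ u = d ∨ u = e := by
  intro u hau
  by_contra hcon
  push_neg at hcon
  obtain ⟨hub, huc, hud, hue⟩ := hcon
  have hcopy := mkCopy hab hac hbc hbd hce had hae hcd hbe hde
  have hdY : d ∈ Y := by simpa using ctx.h3 _ hcopy 3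
  obtain ⟨σ, hσ⟩ := ctx.h5 d hdY
  have adj : ∀ {x y : V}, Γ.Adj x y → Γ.Adj (σ x) (σ y) := fun h => σ.map_adj_iff.mpr h
  have nei : ∀ {x y : V}, x ≠ y → σ x ≠ σ y := fun h => σ.injective.ne h
  have mcopy : IsCopy D5 Γ ![σ a, σ b, σ c, σ d, σ e] :=
    mkCopy (adj hab) (adj hac) (adj hbc) (adj hbd) (adj hce)
      (nei had) (nei hae) (nei hcd) (nei hbe) (nei hde)
  have notX : ∀ (i : Fin 5), i ≠ 3 → ¬ (![σ a, σ b, σ c, σ d, σ e] i ∈ X) := by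
    intro i hi3 hmem
    exact hi3 (ctx.h2 _ mcopy i 3 hmem (by simpa using hσ))
  have haX : σ a ∉ X := by have := notX 0 (by decide); simpa using this
  have hbX : σ b ∉ X := by have := notX 1 (by decide); simpa using this
  have hcX : σ c ∉ X := by have := notX 2 (by decide); simpa using this
  have heX : σ e ∉ X := by have := notX 4 (by decide); simpa using this
  have c2 : IsCopy D5 Γ ![σ b, σ a, σ c, σ u, σ e] :=
    mkCopy (adj hab.symm) (adj hbc) (adj hac) (adj hau) (adj hce)
      (nei (Ne.symm hub)) (nei hbe) (nei (Ne.symm huc)) (nei hae) (nei hue)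
  have hUX : σ u ∈ X := by
    rcases h1_tuple ctx c2 with h|h|h|h|h
    exacts [absurd h hbX, absurd h haX, absurd h hcX, h, absurd h heX]
  have c3 : IsCopy D5 Γ ![σ c, σ a, σ b, σ u, σ d] :=
    mkCopy (adj hac.symm) (adj hbc.symm) (adj hab) (adj hau) (adj hbd)
      (nei (Ne.symm huc)) (nei hcd) (nei (Ne.symm hub)) (nei had) (nei hud)
  have := ctx.h2 _ c3 3 4 (by simpa using hUX) (by simpa using hσ)
  exact absurd this (by decide)

lemma key5 (ctx : Ctx Γ X Y) {v p q : V} (hv : v ∈ Y) (hp : Γ.Adj v p) (hq : Γ.Adj v q)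
    (hpX : p ∈ X) (hqX : q ∈ X) : p = q := by
  obtain ⟨f, hf, hf0⟩ := ctx.h4 v hv
  obtain ⟨u01, u02, u12, u13, u24⟩ := copy_unpack hf
  have hne := copy_ne hf
  have k := key1 ctx u01 u02 u12 u13 u24 (hne 0 3 (by decide)) (hne 0 4 (by decide))
    (hne 2 3 (by decide)) (hne 1 4 (by decide)) (hne 3 4 (by decide))
  subst hf0
  rcases k p hp with rfl|rfl|rfl|rfl <;> rcases k q hq with rfl|rfl|rfl|rfl <;>
    first
      | rfl
      | (exact absurd (ctx.h2 f hf _ _ hpX hqX) (by decide))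

lemma key6 (ctx : Ctx Γ X Y) {a b c d e : V}
    (hab : Γ.Adj a b) (hac : Γ.Adj a c) (hbc : Γ.Adj b c) (hbd : Γ.Adj b d) (hce : Γ.Adj c e)
    (had : a ≠ d) (hae : a ≠ e) (hcd : c ≠ d) (hbe : b ≠ e) (hde : d ≠ e) :
    ∀ u, Γ.Adj b u → u = a ∨ u = c ∨ u = d ∨ u = e := by
  intro u hbu
  by_contra hcon
  push_neg at hcon
  obtain ⟨hua, huc, hud, hue⟩ := hcon
  have hcopy := mkCopy hab hac hbc hbd hce had hae hcd hbe hde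
  have hdY : d ∈ Y := by simpa using ctx.h3 _ hcopy 3
  obtain ⟨σ, hσ⟩ := ctx.h5 d hdY
  have adj : ∀ {x y : V}, Γ.Adj x y → Γ.Adj (σ x) (σ y) := fun h => σ.map_adj_iff.mpr h
  have nei : ∀ {x y : V}, x ≠ y → σ x ≠ σ y := fun h => σ.injective.ne h
  have mcopy : IsCopy D5 Γ ![σ a, σ b, σ c, σ d, σ e] :=
    mkCopy (adj hab) (adj hac) (adj hbc) (adj hbd) (adj hce)
      (nei had) (nei hae) (nei hcd) (nei hbe) (nei hde)
  have notX : ∀ (i : Fin 5), i ≠ 3 → ¬ (![σ a, σ b, σ c, σ d, σ e] i ∈ X) := by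
    intro i hi3 hmem
    exact hi3 (ctx.h2 _ mcopy i 3 hmem (by simpa using hσ))
  have haX : σ a ∉ X := by have := notX 0 (by decide); simpa using this
  have hbX : σ b ∉ X := by have := notX 1 (by decide); simpa using this
  have hcX : σ c ∉ X := by have := notX 2 (by decide); simpa using this
  have heX : σ e ∉ X := by have := notX 4 (by decide); simpa using this
  have c2 : IsCopy D5 Γ ![σ a, σ b, σ c, σ u, σ e] :=
    mkCopy (adj hab) (adj hac) (adj hbc) (adj hbu) (adj hce)
      (nei (Ne.symm hua)) (nei hae) (nei (Ne.symm huc)) (nei hbe) (nei hue)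
  have hUX : σ u ∈ X := by
    rcases h1_tuple ctx c2 with h|h|h|h|h
    exacts [absurd h haX, absurd h hbX, absurd h hcX, h, absurd h heX]
  have hbY : σ b ∈ Y := by simpa using ctx.h3 _ mcopy 1
  have := key5 ctx hbY (adj hbu) (adj hbd) hUX hσ
  exact hud (σ.injective this)

lemma apexStep (ctx : Ctx Γ X Y) {v z : V} (hv : v ∈ Y) (hvz : Γ.Adj v z) :
    ∃ w, Γ.Adj w v ∧ Γ.Adj w z := by
  obtain ⟨f, hf, hf0⟩ := ctx.h4 v hv
  obtain ⟨u01, u02, u12, u13, u24⟩ := copy_unpack hf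
  have hne := copy_ne hf
  have k := key1 ctx u01 u02 u12 u13 u24 (hne 0 3 (by decide)) (hne 0 4 (by decide))
    (hne 2 3 (by decide)) (hne 1 4 (by decide)) (hne 3 4 (by decide))
  subst hf0
  rcases k z hvz with rfl|rfl|rfl|rfl
  · exact ⟨f 2, u02.symm, u12.symm⟩
  · exact ⟨f 1, u01.symm, u12⟩
  · exact ⟨f 1, u01.symm, u13⟩
  · exact ⟨f 2, u02.symm, u24⟩

end structural

section structural2
variable {V : Type} {Γ : SimpleGraph V} {X Y : Set V}

lemma copyClosure (ctx : Ctx Γ X Y) {a b c d e : V}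
    (hab : Γ.Adj a b) (hac : Γ.Adj a c) (hbc : Γ.Adj b c) (hbd : Γ.Adj b d) (hce : Γ.Adj c e)
    (had : a ≠ d) (hae : a ≠ e) (hcd : c ≠ d) (hbe : b ≠ e) (hde : d ≠ e) :
    ∀ u w, Γ.Adj u w → (u = a ∨ u = b ∨ u = c ∨ u = d ∨ u = e) →
      (w = a ∨ w = b ∨ w = c ∨ w = d ∨ w = e) := by
  have hcopy := mkCopy hab hac hbc hbd hce had hae hcd hbe hde
  have hdY : d ∈ Y := by simpa using ctx.h3 _ hcopy 3
  have heY : e ∈ Y := by simpa using ctx.h3 _ hcopy 4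
  have na := key1 ctx hab hac hbc hbd hce had hae hcd hbe hde
  have nb := key6 ctx hab hac hbc hbd hce had hae hcd hbe hde
  have nc := key6 ctx hac hab hbc.symm hce hbd hae had hbe hcd (Ne.symm hde)
  have main : (∀ w, Γ.Adj d w → (w = a ∨ w = b ∨ w = c ∨ w = d ∨ w = e)) ∧
      (∀ w, Γ.Adj e w → (w = a ∨ w = b ∨ w = c ∨ w = d ∨ w = e)) := by
    by_cases hcd2 : Γ.Adj c d
    · -- case c ~ d
      have nd := key1 ctx hbd.symm hcd2.symm hbc hab.symm hce
        (Ne.symm had) hde (Ne.symm hac.ne) hbe hae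
      obtain ⟨x, hxe, hxc⟩ := apexStep ctx heY hce.symm
      have nE : ∀ w, Γ.Adj e w → (w = a ∨ w = b ∨ w = c ∨ w = d ∨ w = e) := by
        rcases nc x hxc.symm with h|h|h|h
        · have hae2 : Γ.Adj a e := h ▸ hxe
          have k := key1 ctx hae2.symm hce.symm hac hab hcd2
            (Ne.symm hbe) (Ne.symm hde) (Ne.symm hbc.ne) had hbd.ne
          intro w hw; have := k w hw; tauto
        · have hbe2 : Γ.Adj b e := h ▸ hxe
          have k := key1 ctx hbe2.symm hce.symm hbc hab.symm hcd2
            (Ne.symm hae) (Ne.symm hde) (Ne.symm hac.ne) hbd.ne had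
          intro w hw; have := k w hw; tauto
        · exact absurd (h ▸ hxe) (Γ.loopless.irrefl e)
        · have hde2 : Γ.Adj d e := h ▸ hxe
          have k := key1 ctx hde2.symm hce.symm hcd2.symm hbd.symm hac.symm
            (Ne.symm hbe) (Ne.symm hae) (Ne.symm hbc.ne) (Ne.symm had) (Ne.symm hab.ne)
          intro w hw; have := k w hw; tauto
      exact ⟨fun w hw => by have := nd w hw; tauto, nE⟩
    · -- case ¬ c ~ d
      obtain ⟨w0, hw0d, hw0b⟩ := apexStep ctx hdY hbd.symm
      have hw0 : Γ.Adj a d ∨ (Γ.Adj e d ∧ Γ.Adj e b) := by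
        rcases nb w0 hw0b.symm with h|h|h|h
        · exact Or.inl (h ▸ hw0d)
        · exact absurd (h ▸ hw0d) hcd2
        · exact absurd (h ▸ hw0d) (Γ.loopless.irrefl d)
        · exact Or.inr ⟨h ▸ hw0d, h ▸ hw0b⟩
      obtain ⟨x, hxe, hxc⟩ := apexStep ctx heY hce.symm
      have hE : Γ.Adj a e ∨ Γ.Adj b e := by
        rcases nc x hxc.symm with h|h|h|h
        · exact Or.inl (h ▸ hxe)
        · exact Or.inr (h ▸ hxe)
        · exact absurd (h ▸ hxe) (Γ.loopless.irrefl e)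
        · exact absurd (h ▸ hxc).symm hcd2
      rcases hw0 with had2|⟨hed2, heb2⟩
      · -- Adj a d
        have nd : ∀ w, Γ.Adj d w → (w = a ∨ w = b ∨ w = c ∨ w = d ∨ w = e) := by
          rcases hE with hea|heb
          · have k := key1 ctx hbd.symm had2.symm hab.symm hbc hea
              (Ne.symm hcd) hde hac.ne hbe hce.ne
            intro w hw; have := k w hw; tauto
          · have k := key1 ctx had2.symm hbd.symm hab hac heb
              (Ne.symm hcd) hde hbc.ne hae hce.ne
            intro w hw; have := k w hw; tauto
        have nE : ∀ w, Γ.Adj e w → (w = a ∨ w = b ∨ w = c ∨ w = d ∨ w = e) := by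
          rcases hE with hea|heb
          · have k := key1 ctx hce.symm hea.symm hac.symm hbc.symm had2
              (Ne.symm hbe) (Ne.symm hde) hab.ne hcd hbd.ne
            intro w hw; have := k w hw; tauto
          · have k := key1 ctx heb.symm hce.symm hbc hbd hac.symm
              (Ne.symm hde) (Ne.symm hae) hcd (Ne.symm hab.ne) (Ne.symm had)
            intro w hw; have := k w hw; tauto
        exact ⟨nd, nE⟩
      · -- Adj e d and Adj e b
        have nd : ∀ w, Γ.Adj d w → (w = a ∨ w = b ∨ w = c ∨ w = d ∨ w = e) := by
          have k := key1 ctx hbd.symm hed2.symm heb2.symm hab.symm hce.symm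
            (Ne.symm had) (Ne.symm hcd) (Ne.symm hae) hbc.ne hac.ne
          intro w hw; have := k w hw; tauto
        have nE : ∀ w, Γ.Adj e w → (w = a ∨ w = b ∨ w = c ∨ w = d ∨ w = e) := by
          have k := key6 ctx hed2.symm hbd.symm heb2 hce.symm hab.symm
            (Ne.symm hcd) (Ne.symm had) hbc.ne (Ne.symm hae) (Ne.symm hac.ne)
          intro w hw; have := k w hw; tauto
        exact ⟨nd, nE⟩
  intro u w huw hu
  rcases hu with rfl|rfl|rfl|rfl|rfl
  · have := na w huw; tauto
  · have := nb w huw; tauto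
  · have := nc w huw; tauto
  · exact main.1 w huw
  · exact main.2 w huw

end structural2

section final
variable {V : Type} {Γ : SimpleGraph V}

lemma walk_closed {S : Set V} (hcl : ∀ u ∈ S, ∀ w, Γ.Adj u w → w ∈ S) :
    ∀ (u w : V) (p : Γ.Walk u w), u ∈ S → w ∈ S := by
  intro u w p
  induction p with
  | nil => exact id
  | cons h q ih => intro hu; exact ih (hcl _ hu _ h)

lemma card_five [Fintype V] (hconn : Γ.Connected) {a b c d e : V}
    (hcl : ∀ u w, Γ.Adj u w → (u = a ∨ u = b ∨ u = c ∨ u = d ∨ u = e) →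
      (w = a ∨ w = b ∨ w = c ∨ w = d ∨ w = e))
    (hinj : Function.Injective ![a,b,c,d,e]) :
    Fintype.card V = 5 ∧ ∀ v : V, v = a ∨ v = b ∨ v = c ∨ v = d ∨ v = e := by
  set S : Set V := {v | v = a ∨ v = b ∨ v = c ∨ v = d ∨ v = e} with hS
  have hcl' : ∀ u ∈ S, ∀ w, Γ.Adj u w → w ∈ S := fun u hu w h => hcl u w h hu
  have hall : ∀ v : V, v = a ∨ v = b ∨ v = c ∨ v = d ∨ v = e := by
    intro v
    exact (hconn.preconnected a v).elim fun p => walk_closed hcl' a v p (Or.inl rfl)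
  have hsurj : Function.Surjective ![a,b,c,d,e] := by
    intro v
    rcases hall v with rfl|rfl|rfl|rfl|rfl
    · exact ⟨0, by simp⟩
    · exact ⟨1, by simp⟩
    · exact ⟨2, by simp⟩
    · exact ⟨3, by simp⟩
    · exact ⟨4, by simp⟩
  have h1 : Fintype.card V ≤ 5 := by
    have := Fintype.card_le_of_surjective _ hsurj
    simpa using this
  have h2 : 5 ≤ Fintype.card V := by
    have := Fintype.card_le_of_injective _ hinj
    simpa using this
  exact ⟨le_antisymm h1 h2, hall⟩

lemma degree_iso [Fintype V] [DecidableEq V] [DecidableRel Γ.Adj] (σ : Γ ≃g Γ) (v : V) :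
    Γ.degree (σ v) = Γ.degree v := by
  have himg : Γ.neighborFinset (σ v) = (Γ.neighborFinset v).image σ := by
    ext w
    simp only [SimpleGraph.mem_neighborFinset, Finset.mem_image]
    constructor
    · intro h
      refine ⟨σ.symm w, ?_, by simp⟩
      have h' : Γ.Adj (σ v) (σ (σ.symm w)) := by
        rwa [RelIso.apply_symm_apply]
      exact σ.map_adj_iff.mp h'
    · rintro ⟨u, hu, rfl⟩
      exact σ.map_adj_iff.mpr hu
  rw [SimpleGraph.degree, himg, Finset.card_image_of_injective _ σ.injective,
    SimpleGraph.degree]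

lemma complete_of [Fintype V] [DecidableEq V] [DecidableRel Γ.Adj] (hcard : Fintype.card V = 5) {x0 : V}
    (htrans : ∀ v : V, ∃ σ : Γ ≃g Γ, σ v = x0)
    {a b c d : V} (hba : Γ.Adj b a) (hbc : Γ.Adj b c) (hbd : Γ.Adj b d)
    (hac : a ≠ c) (had : a ≠ d) (hcd : c ≠ d) :
    ∀ u v : V, u ≠ v → Γ.Adj u v := by
  have hdeg : ∀ v w : V, Γ.degree v = Γ.degree w := by
    intro v w
    obtain ⟨σ, hσ⟩ := htrans v
    obtain ⟨τ, hτ⟩ := htrans w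
    have h1 := degree_iso σ v
    have h2 := degree_iso τ w
    rw [hσ] at h1; rw [hτ] at h2
    omega
  have h3 : 3 ≤ Γ.degree b := by
    have hsub : ({a, c, d} : Finset V) ⊆ Γ.neighborFinset b := by
      intro x hx
      simp only [Finset.mem_insert, Finset.mem_singleton] at hx
      rcases hx with rfl|rfl|rfl
      · exact (SimpleGraph.mem_neighborFinset _ _ _).mpr hba
      · exact (SimpleGraph.mem_neighborFinset _ _ _).mpr hbc
      · exact (SimpleGraph.mem_neighborFinset _ _ _).mpr hbd
    have hc3 : ({a, c, d} : Finset V).card = 3 := by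
      rw [Finset.card_insert_of_notMem (by simp [hac, had]),
        Finset.card_insert_of_notMem (by simp [hcd]), Finset.card_singleton]
    calc 3 = ({a, c, d} : Finset V).card := hc3.symm
    _ ≤ _ := Finset.card_le_card hsub
  have h4 : Γ.degree b ≤ 4 := by
    have := Γ.degree_lt_card_verts b
    omega
  have hsum := Γ.sum_degrees_eq_twice_card_edges
  have hsum5 : ∑ v : V, Γ.degree v = 5 * Γ.degree b := by
    rw [Finset.sum_congr rfl (fun v _ => hdeg v b), Finset.sum_const, Finset.card_univ, hcard,
      smul_eq_mul]
  have hk4 : Γ.degree b = 4 := by omega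
  intro u v huv
  have hdu : Γ.degree u = 4 := by rw [hdeg u b, hk4]
  have hsub : Γ.neighborFinset u ⊆ Finset.univ.erase u := by
    intro w hw
    exact Finset.mem_erase.mpr ⟨((SimpleGraph.mem_neighborFinset _ _ _).mp hw).ne',
      Finset.mem_univ _⟩
  have hcard_erase : (Finset.univ.erase u).card = 4 := by
    rw [Finset.card_erase_of_mem (Finset.mem_univ _), Finset.card_univ, hcard]
  have heq : Γ.neighborFinset u = Finset.univ.erase u :=
    Finset.eq_of_subset_of_card_le hsub (by rw [hcard_erase, ← hdu]; rfl)
  have : v ∈ Γ.neighborFinset u := by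
    rw [heq]
    exact Finset.mem_erase.mpr ⟨Ne.symm huv, Finset.mem_univ _⟩
  exact (SimpleGraph.mem_neighborFinset _ _ _).mp this

lemma iso_top [Fintype V] (hcard : Fintype.card V = 5)
    (hcompl : ∀ u v : V, u ≠ v → Γ.Adj u v) :
    Nonempty (Γ ≃g (⊤ : SimpleGraph (Fin 5))) := by
  let e := Fintype.equivFinOfCardEq hcard
  refine ⟨⟨e, ?_⟩⟩
  intro u v
  simp only [SimpleGraph.top_adj]
  constructor
  · exact fun h => hcompl _ _ (fun hab => h (congrArg e hab))
  · exact fun h => e.injective.ne h.ne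

end final
section counting
variable {V : Type} [Fintype V] [DecidableEq V] {Γ : SimpleGraph V} [Fintype (Γ ≃g Γ)]
  [DecidableEq (Γ ≃g Γ)]

instance orbDec (v : V) : DecidablePred (· ∈ orb Γ v) :=
  fun u => decidable_of_iff (∃ σ : Γ ≃g Γ, σ v = u) Iff.rfl

variable (Γ) in
noncomputable def orbF (v : V) : Finset V := univ.filter (· ∈ orb Γ v)

variable (Γ X) in
noncomputable def aCnt (X : Finset V) (v : V) : ℕ :=
  (univ.filter (fun σ : Γ ≃g Γ => σ v ∈ X)).card

lemma fib_card_eq (v : V) {y : V} (hy : y ∈ orb Γ v) :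
    (univ.filter (fun σ : Γ ≃g Γ => σ v = y)).card
      = (univ.filter (fun σ : Γ ≃g Γ => σ v = v)).card := by
  obtain ⟨τ, hτ⟩ := hy
  apply Finset.card_nbij' (fun σ => σ.trans τ.symm) (fun σ => σ.trans τ)
  · intro σ hσ
    simp only [mem_coe, mem_filter, mem_univ, true_and] at hσ ⊢
    simp [RelIso.trans_apply, hσ, ← hτ]
  · intro σ hσ
    simp only [mem_coe, mem_filter, mem_univ, true_and] at hσ ⊢
    simp [RelIso.trans_apply, hσ, hτ]
  · intro σ _; exact RelIso.ext (fun u => by simp)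
  · intro σ _; exact RelIso.ext (fun u => by simp)

lemma orb_card_mul (v : V) :
    (orbF Γ v).card * (univ.filter (fun σ : Γ ≃g Γ => σ v = v)).card
      = Fintype.card (Γ ≃g Γ) := by
  have h := Finset.card_eq_sum_card_fiberwise
    (f := fun σ : Γ ≃g Γ => σ v) (s := univ) (t := orbF Γ v)
    (fun σ _ => by simp only [orbF, mem_coe, mem_filter, mem_univ, true_and]; exact ⟨σ, rfl⟩)
  rw [Fintype.card, h]
  rw [Finset.sum_congr rfl (fun y hy => fib_card_eq v (by simpa [orbF] using hy))]
  simp [mul_comm]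

lemma aCnt_mul (X : Finset V) (v : V) :
    aCnt Γ X v * (orbF Γ v).card = ((orbF Γ v) ∩ X).card * Fintype.card (Γ ≃g Γ) := by
  have key : aCnt Γ X v = ((orbF Γ v) ∩ X).card
      * (univ.filter (fun σ : Γ ≃g Γ => σ v = v)).card := by
    have h := Finset.card_eq_sum_card_fiberwise
      (f := fun σ : Γ ≃g Γ => σ v) (s := univ.filter (fun σ : Γ ≃g Γ => σ v ∈ X))
      (t := (orbF Γ v) ∩ X)
      (fun σ hσ => by
        simp only [mem_coe, mem_filter, mem_univ, true_and] at hσ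
        simp only [Finset.mem_coe, Finset.mem_inter, orbF, mem_filter, mem_univ, true_and, hσ, and_true]
        exact ⟨σ, rfl⟩)
    rw [aCnt, h]
    rw [Finset.sum_congr rfl (fun y hy => ?_), Finset.sum_const, smul_eq_mul]
    have h1 : ((univ.filter (fun σ : Γ ≃g Γ => σ v ∈ X)).filter (fun σ => σ v = y))
        = univ.filter (fun σ : Γ ≃g Γ => σ v = y) := by
      ext σ
      simp only [mem_filter, mem_univ, true_and, and_iff_right_iff_imp]
      intro h'; rw [h']
      exact (Finset.mem_inter.mp hy).2
    rw [h1]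
    exact fib_card_eq v (by have := (Finset.mem_inter.mp hy).1; simpa [orbF] using this)
  rw [key, mul_right_comm, ← orb_card_mul v]
  ring

end counting

section counting2
variable {V : Type} [Fintype V] [DecidableEq V] {Γ : SimpleGraph V} [Fintype (Γ ≃g Γ)]
  [DecidableEq (Γ ≃g Γ)]

lemma aCnt_eq_sum (X : Finset V) (v : V) :
    aCnt Γ X v = ∑ σ : Γ ≃g Γ, if σ v ∈ X then 1 else 0 := by
  rw [aCnt, Finset.card_filter]

lemma copy_sum_lower (X : Finset V) (htr : ∀ g : Fin 5 → V, IsCopy D5 Γ g → ∃ i, g i ∈ X)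
    {f : Fin 5 → V} (hf : IsCopy D5 Γ f) :
    Fintype.card (Γ ≃g Γ) ≤ ∑ i : Fin 5, aCnt Γ X (f i) := by
  simp only [aCnt_eq_sum]
  rw [Finset.sum_comm]
  rw [Fintype.card]
  have : ∀ σ : Γ ≃g Γ, σ ∈ (univ : Finset (Γ ≃g Γ)) →
      1 ≤ ∑ i : Fin 5, if σ (f i) ∈ X then 1 else 0 := by
    intro σ _
    obtain ⟨i0, hi0⟩ := htr _ (copy_comp σ hf)
    have hi0' : σ (f i0) ∈ X := hi0
    calc 1 = if σ (f i0) ∈ X then 1 else 0 := (if_pos hi0').symm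
    _ ≤ _ := Finset.single_le_sum (f := fun i => if σ (f i) ∈ X then 1 else 0)
        (fun i _ => Nat.zero_le _) (mem_univ i0)
  calc (univ : Finset (Γ ≃g Γ)).card = ∑ σ : Γ ≃g Γ, 1 := by simp
  _ ≤ _ := Finset.sum_le_sum this

lemma sum_eq_forall_one {α : Type*} {s : Finset α} {h : α → ℕ} (h1 : ∀ i ∈ s, 1 ≤ h i)
    (h2 : ∑ i ∈ s, h i ≤ s.card) : ∀ i ∈ s, h i = 1 := by
  by_contra hc
  push_neg at hc
  obtain ⟨i0, hi0, hne⟩ := hc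
  have : ∑ i ∈ s, (fun _ => 1) i < ∑ i ∈ s, h i :=
    Finset.sum_lt_sum h1 ⟨i0, hi0, lt_of_le_of_ne (h1 i0 hi0) (Ne.symm hne)⟩
  simp only [Finset.sum_const, smul_eq_mul, mul_one] at this
  omega

lemma exact_one (X : Finset V) (htr : ∀ g : Fin 5 → V, IsCopy D5 Γ g → ∃ i, g i ∈ X)
    {f : Fin 5 → V} (hf : IsCopy D5 Γ f)
    (hupper : ∑ i : Fin 5, aCnt Γ X (f i) ≤ Fintype.card (Γ ≃g Γ)) :
    ∀ σ : Γ ≃g Γ, (univ.filter (fun i : Fin 5 => σ (f i) ∈ X)).card = 1 := by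
  have hsum : ∑ σ : Γ ≃g Γ, (univ.filter (fun i : Fin 5 => σ (f i) ∈ X)).card
      ≤ Fintype.card (Γ ≃g Γ) := by
    calc ∑ σ : Γ ≃g Γ, (univ.filter (fun i : Fin 5 => σ (f i) ∈ X)).card
        = ∑ σ : Γ ≃g Γ, ∑ i : Fin 5, if σ (f i) ∈ X then 1 else 0 := by
          refine Finset.sum_congr rfl (fun σ _ => ?_); rw [Finset.card_filter]
    _ = ∑ i : Fin 5, aCnt Γ X (f i) := by rw [Finset.sum_comm]; simp only [aCnt_eq_sum]
    _ ≤ _ := hupper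
  have hone : ∀ σ : Γ ≃g Γ, σ ∈ (univ : Finset (Γ ≃g Γ)) →
      1 ≤ (univ.filter (fun i : Fin 5 => σ (f i) ∈ X)).card := by
    intro σ _
    obtain ⟨i0, hi0⟩ := htr _ (copy_comp σ hf)
    have hi0' : σ (f i0) ∈ X := hi0
    exact Finset.card_pos.mpr ⟨i0, Finset.mem_filter.mpr ⟨mem_univ _, hi0'⟩⟩
  intro σ
  exact sum_eq_forall_one hone (by rw [Finset.card_univ]; exact hsum) σ (mem_univ σ)

lemma pairY (X : Finset V) (YF : Finset V) :
    ∑ v ∈ YF, aCnt Γ X v ≤ X.card * Fintype.card (Γ ≃g Γ) := by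
  simp only [aCnt_eq_sum]
  rw [Finset.sum_comm]
  calc ∑ σ : Γ ≃g Γ, ∑ v ∈ YF, (if σ v ∈ X then 1 else 0)
      = ∑ σ : Γ ≃g Γ, (YF.filter (fun v => σ v ∈ X)).card := by
        refine Finset.sum_congr rfl (fun σ _ => ?_); rw [Finset.card_filter]
  _ ≤ ∑ _σ : Γ ≃g Γ, X.card := by
      refine Finset.sum_le_sum (fun σ _ => ?_)
      refine Finset.card_le_card_of_injOn (fun v => σ v) (fun v hv => (Finset.mem_filter.mp hv).2)
        (fun u _ w _ h => σ.injective h)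
  _ = X.card * Fintype.card (Γ ≃g Γ) := by
      rw [Finset.sum_const, Finset.card_univ, smul_eq_mul, mul_comm]

end counting2

lemma sum_eq_forall_const {α : Type*} {s : Finset α} {h : α → ℕ} {m : ℕ}
    (h1 : ∀ i ∈ s, m ≤ h i) (h2 : ∑ i ∈ s, h i ≤ s.card * m) : ∀ i ∈ s, h i = m := by
  by_contra hc
  push_neg at hc
  obtain ⟨i0, hi0, hne⟩ := hc
  have : ∑ i ∈ s, (fun _ => m) i < ∑ i ∈ s, h i :=
    Finset.sum_lt_sum h1 ⟨i0, hi0, lt_of_le_of_ne (h1 i0 hi0) (Ne.symm hne)⟩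
  simp only [Finset.sum_const, smul_eq_mul] at this
  omega

lemma tuple_eta {V : Type*} (f : Fin 5 → V) : ∀ i, ![f 0, f 1, f 2, f 3, f 4] i = f i := by
  intro i; fin_cases i <;> simp

theorem main_ineq (V : Type) [Fintype V] (Γ : SimpleGraph V) (hconn : Γ.Connected)
    (hcopy : ∃ f : Fin 5 → V, IsCopy D5 Γ f)
    (hK5 : IsEmpty (Γ ≃g (⊤ : SimpleGraph (Fin 5)))) :
    upsilonSym D5 Γ < 5 * upsilon D5 Γ := by
  classical
  by_contra hconlt
  push_neg at hconlt
  letI : Finite (Γ ≃g Γ) := autFinite Γ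
  letI : Fintype (Γ ≃g Γ) := Fintype.ofFinite _
  obtain ⟨X, hXfin, hXcard, hXtrans⟩ := upsilon_spec (K := D5) (Γ := Γ)
  set t := upsilon D5 Γ with ht
  set XF : Finset V := hXfin.toFinset with hXFdef
  have hmemXF : ∀ v, v ∈ XF ↔ v ∈ X := fun v => Set.Finite.mem_toFinset hXfin
  have hXFcard : XF.card = t := by
    rw [hXFdef, ← Set.ncard_eq_toFinset_card _ hXfin, hXcard]
  set g := Fintype.card (Γ ≃g Γ) with hg
  have hgpos : 0 < g := Fintype.card_pos_iff.mpr ⟨RelIso.refl _⟩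
  have htr' : ∀ f : Fin 5 → V, IsCopy D5 Γ f → ∃ i, f i ∈ XF := by
    intro f hf; obtain ⟨i, hi⟩ := hXtrans f hf; exact ⟨i, (hmemXF _).mpr hi⟩
  have orbF_self : ∀ v : V, v ∈ orbF Γ v := by
    intro v
    simp only [orbF, mem_filter, mem_univ, true_and]
    exact ⟨RelIso.refl _, rfl⟩
  have orbF_pos : ∀ v : V, 0 < (orbF Γ v).card :=
    fun v => Finset.card_pos.mpr ⟨v, orbF_self v⟩
  set YF : Finset V :=
    univ.filter (fun v => (orbF Γ v).card ≤ 5 * ((orbF Γ v) ∩ XF).card) with hYFdef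
  have memYF_iff : ∀ v : V,
      v ∈ YF ↔ (orbF Γ v).card ≤ 5 * ((orbF Γ v) ∩ XF).card := by
    intro v; rw [hYFdef]; simp
  -- lower/upper bounds on aCnt
  have aY : ∀ v ∈ YF, g ≤ 5 * aCnt Γ XF v := by
    intro v hv
    have h2 := (memYF_iff v).mp hv
    have h1 := aCnt_mul (Γ := Γ) XF v
    have h3 := orbF_pos v
    have hchain : g * (orbF Γ v).card ≤ (5 * aCnt Γ XF v) * (orbF Γ v).card := by
      calc g * (orbF Γ v).card = (orbF Γ v).card * g := mul_comm _ _
      _ ≤ (5 * ((orbF Γ v) ∩ XF).card) * g := Nat.mul_le_mul_right g h2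
      _ = 5 * (((orbF Γ v) ∩ XF).card * g) := by ring
      _ = 5 * (aCnt Γ XF v * (orbF Γ v).card) := by rw [← h1]
      _ = (5 * aCnt Γ XF v) * (orbF Γ v).card := by ring
    exact Nat.le_of_mul_le_mul_right hchain h3
  have aNY : ∀ v, v ∉ YF → 5 * aCnt Γ XF v < g := by
    intro v hv
    have h2 : 5 * ((orbF Γ v) ∩ XF).card < (orbF Γ v).card := by
      have := (memYF_iff v).not.mp hv
      omega
    have h1 := aCnt_mul (Γ := Γ) XF v
    have h3 := orbF_pos v
    have hchain : (5 * aCnt Γ XF v) * (orbF Γ v).card < g * (orbF Γ v).card := by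
      calc (5 * aCnt Γ XF v) * (orbF Γ v).card = 5 * (aCnt Γ XF v * (orbF Γ v).card) := by ring
      _ = 5 * (((orbF Γ v) ∩ XF).card * g) := by rw [h1]
      _ = (5 * ((orbF Γ v) ∩ XF).card) * g := by ring
      _ < (orbF Γ v).card * g := (Nat.mul_lt_mul_right hgpos).mpr h2
      _ = g * (orbF Γ v).card := mul_comm _ _
    exact Nat.lt_of_mul_lt_mul_right hchain
  -- Y is a transversal
  have Ytrans : ∀ f : Fin 5 → V, IsCopy D5 Γ f → ∃ i, f i ∈ YF := by
    intro f hf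
    by_contra hno
    push_neg at hno
    have hlow := copy_sum_lower XF htr' hf
    have hbnd : ∀ i : Fin 5, 5 * aCnt Γ XF (f i) ≤ g - 1 := by
      intro i; have := aNY _ (hno i); omega
    have hsum : ∑ i : Fin 5, 5 * aCnt Γ XF (f i) ≤ 5 * (g - 1) := by
      calc ∑ i : Fin 5, 5 * aCnt Γ XF (f i) ≤ ∑ _i : Fin 5, (g - 1) :=
        Finset.sum_le_sum (fun i _ => hbnd i)
      _ = 5 * (g - 1) := by simp [mul_comm]
    rw [← Finset.mul_sum] at hsum
    omega
  -- Y is invariant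
  have orb_eq : ∀ (σ : Γ ≃g Γ) (v : V), orb Γ (σ v) = orb Γ v := by
    intro σ v
    ext w
    constructor
    · rintro ⟨τ, rfl⟩; exact ⟨σ.trans τ, rfl⟩
    · rintro ⟨τ, rfl⟩
      refine ⟨(σ.symm).trans τ, ?_⟩
      simp [RelIso.trans_apply]
  have memYF_sigma : ∀ (σ : Γ ≃g Γ) (v : V), σ v ∈ YF ↔ v ∈ YF := by
    intro σ v
    have horb : orbF Γ (σ v) = orbF Γ v := by
      simp only [orbF]
      congr 1
      ext w
      rw [orb_eq σ v]
    rw [memYF_iff, memYF_iff, horb]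
  have Yinv : GraphInvariant Γ (↑YF : Set V) := by
    intro σ
    ext w
    simp only [Set.mem_image, Finset.mem_coe]
    constructor
    · rintro ⟨v, hv, rfl⟩; exact (memYF_sigma σ v).mpr hv
    · intro hw
      refine ⟨σ.symm w, ?_, by simp⟩
      have : σ (σ.symm w) ∈ YF := by
        simpa using hw
      exact (memYF_sigma σ (σ.symm w)).mp this
  -- card bound for Y
  have hYcardle : YF.card ≤ 5 * t := by
    have hpair := pairY (Γ := Γ) XF YF
    have hlow2 : YF.card * g ≤ ∑ v ∈ YF, 5 * aCnt Γ XF v := by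
      calc YF.card * g = ∑ _v ∈ YF, g := by simp [mul_comm]
      _ ≤ _ := Finset.sum_le_sum (fun v hv => aY v hv)
    rw [← Finset.mul_sum] at hlow2
    have : YF.card * g ≤ (5 * t) * g := by
      calc YF.card * g ≤ 5 * ∑ v ∈ YF, aCnt Γ XF v := hlow2
      _ ≤ 5 * (XF.card * g) := Nat.mul_le_mul_left 5 hpair
      _ = (5 * t) * g := by rw [hXFcard]; ring
    exact Nat.le_of_mul_le_mul_right this hgpos
  have hsymle : upsilonSym D5 Γ ≤ YF.card := by
    have := upsilonSym_le (Γ := Γ) (K := D5) (X := (↑YF : Set V)) (Set.toFinite _)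
      (fun f hf => by obtain ⟨i, hi⟩ := Ytrans f hf; exact ⟨i, by simpa using hi⟩) Yinv
    simpa [Set.ncard_coe_finset] using this
  have hYcard : YF.card = 5 * t := le_antisymm hYcardle (le_trans hconlt hsymle)
  -- every Y element has 5*aCnt = g
  have hallY : ∀ v ∈ YF, 5 * aCnt Γ XF v = g := by
    apply sum_eq_forall_const (fun v hv => aY v hv)
    have hpair := pairY (Γ := Γ) XF YF
    calc ∑ v ∈ YF, 5 * aCnt Γ XF v = 5 * ∑ v ∈ YF, aCnt Γ XF v := by rw [Finset.mul_sum]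
    _ ≤ 5 * (XF.card * g) := Nat.mul_le_mul_left 5 hpair
    _ = YF.card * g := by rw [hXFcard, hYcard]; ring
  have h5' : ∀ v ∈ (↑YF : Set V), ∃ σ : Γ ≃g Γ, σ v ∈ X := by
    intro v hv
    have h := hallY v (by simpa using hv)
    have : 0 < aCnt Γ XF v := by omega
    obtain ⟨σ, hσ⟩ := Finset.card_pos.mp this
    simp only [mem_filter, mem_univ, true_and] at hσ
    exact ⟨σ, (hmemXF _).mp hσ⟩
  have upper_all : ∀ v : V, 5 * aCnt Γ XF v ≤ g := by
    intro v
    by_cases hv : v ∈ YF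
    · exact le_of_eq (hallY v hv)
    · exact le_of_lt (aNY v hv)
  -- every vertex of every copy is in Y
  have h3' : ∀ f : Fin 5 → V, IsCopy D5 Γ f → ∀ i, f i ∈ (↑YF : Set V) := by
    intro f hf i
    by_contra hni
    have hni' : f i ∉ YF := by simpa using hni
    have hlow := copy_sum_lower XF htr' hf
    have hstrict : ∑ j : Fin 5, 5 * aCnt Γ XF (f j) < ∑ _j : Fin 5, g :=
      Finset.sum_lt_sum (fun j _ => upper_all (f j)) ⟨i, mem_univ _, aNY _ hni'⟩
    rw [← Finset.mul_sum] at hstrict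
    simp only [Finset.sum_const, Finset.card_univ, Fintype.card_fin, smul_eq_mul] at hstrict
    omega
  -- sum of aCnt over a copy equals g
  have hsum_eq : ∀ f : Fin 5 → V, IsCopy D5 Γ f →
      ∑ i : Fin 5, aCnt Γ XF (f i) ≤ g := by
    intro f hf
    have : ∑ i : Fin 5, 5 * aCnt Γ XF (f i) = ∑ _i : Fin 5, g :=
      Finset.sum_congr rfl (fun i _ => hallY (f i) (by simpa using h3' f hf i))
    rw [← Finset.mul_sum] at this
    simp only [Finset.sum_const, Finset.card_univ, Fintype.card_fin, smul_eq_mul] at this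
    omega
  -- exactly one marked vertex in each copy
  have h2' : ∀ f : Fin 5 → V, IsCopy D5 Γ f → ∀ i j : Fin 5, f i ∈ X → f j ∈ X → i = j := by
    intro f hf i j hi hj
    have hext := exact_one XF htr' hf (hsum_eq f hf) (RelIso.refl _)
    have hfil : (univ.filter (fun i : Fin 5 => (RelIso.refl Γ.Adj) (f i) ∈ XF))
        = univ.filter (fun i : Fin 5 => f i ∈ XF) := by
      apply Finset.filter_congr
      intro k _
      simp
    rw [hfil] at hext
    have hcard1 : (univ.filter (fun i : Fin 5 => f i ∈ XF)).card ≤ 1 := le_of_eq hext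
    exact Finset.card_le_one.mp hcard1 i
      (Finset.mem_filter.mpr ⟨mem_univ _, (hmemXF _).mpr hi⟩) j
      (Finset.mem_filter.mpr ⟨mem_univ _, (hmemXF _).mpr hj⟩)
  -- every Y element is an apex
  set A0 : Set V := {v | ∃ f : Fin 5 → V, IsCopy D5 Γ f ∧ f 0 = v} with hA0def
  have hA0trans : IsTransversal D5 Γ A0 := fun f hf => ⟨0, ⟨f, hf, rfl⟩⟩
  have hA0inv : GraphInvariant Γ A0 := by
    intro σ
    ext w
    simp only [Set.mem_image, hA0def, Set.mem_setOf_eq]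
    constructor
    · rintro ⟨v, ⟨f, hf, rfl⟩, rfl⟩
      exact ⟨fun i => σ (f i), copy_comp σ hf, rfl⟩
    · rintro ⟨f, hf, rfl⟩
      exact ⟨σ.symm (f 0), ⟨fun i => σ.symm (f i), copy_comp σ.symm hf, rfl⟩, by simp⟩
  have hA0sub : A0 ⊆ (↑YF : Set V) := by
    rintro v ⟨f, hf, rfl⟩
    exact h3' f hf 0
  have hsymA0 : 5 * t ≤ A0.ncard :=
    le_trans hconlt (upsilonSym_le (Set.toFinite A0) hA0trans hA0inv)
  have hA0eq : A0 = (↑YF : Set V) := by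
    apply Set.eq_of_subset_of_ncard_le hA0sub
    rw [Set.ncard_coe_finset, hYcard]
    exact hsymA0
  have h4' : ∀ v ∈ (↑YF : Set V), ∃ f : Fin 5 → V, IsCopy D5 Γ f ∧ f 0 = v := by
    intro v hv
    rw [← hA0eq] at hv
    exact hv
  -- assemble context and run the structural argument
  have ctx : Ctx Γ X (↑YF : Set V) := ⟨hXtrans, h2', h3', h4', h5'⟩
  obtain ⟨f, hf⟩ := hcopy
  obtain ⟨u01, u02, u12, u13, u24⟩ := copy_unpack hf
  have hne := copy_ne hf
  have hclosure := copyClosure ctx u01 u02 u12 u13 u24 (hne 0 3 (by decide))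
    (hne 0 4 (by decide)) (hne 2 3 (by decide)) (hne 1 4 (by decide)) (hne 3 4 (by decide))
  have hinj5 : Function.Injective ![f 0, f 1, f 2, f 3, f 4] := by
    intro i j h
    rw [tuple_eta, tuple_eta] at h
    exact hf.1 h
  obtain ⟨hcard5, hall⟩ := card_five hconn (fun u w h hu => hclosure u w h hu) hinj5
  have hYuniv : ∀ v : V, v ∈ YF := by
    intro v
    rcases hall v with rfl|rfl|rfl|rfl|rfl
    · simpa using h3' f hf 0
    · simpa using h3' f hf 1
    · simpa using h3' f hf 2
    · simpa using h3' f hf 3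
    · simpa using h3' f hf 4
  have hYcard5 : YF.card = 5 := by
    have : YF = univ := Finset.eq_univ_iff_forall.mpr hYuniv
    rw [this, Finset.card_univ, hcard5]
  have ht1 : t = 1 := by omega
  have hX1 : X.ncard = 1 := by rw [hXcard, ht1]
  obtain ⟨x0, hx0⟩ := Set.ncard_eq_one.mp hX1
  have htrans5 : ∀ v : V, ∃ σ : Γ ≃g Γ, σ v = x0 := by
    intro v
    obtain ⟨σ, hσ⟩ := h5' v (by simpa using hYuniv v)
    rw [hx0] at hσ
    exact ⟨σ, hσ⟩
  have hcompl := complete_of hcard5 htrans5 u01.symm u12 u13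
    (hne 0 2 (by decide)) (hne 0 3 (by decide)) (hne 2 3 (by decide))
  exact (iso_top hcard5 hcompl).elim (fun iso => hK5.false iso)

/-- **Theorem 2.2 and Theorem 1.3.** Every finite connected graph `Γ` that contains a
subgraph isomorphic to `D₅` and is not isomorphic to `K₅` satisfies the strict inequality
`5·Υ_v(D₅,Γ) > Υ_v^sym(D₅,Γ)`. Consequently, `D₅` is not vertex-expensive in the class of
connected graphs: it is not the case that for every `m` there is a finite connected graph
`Γ_m` with `Υ_v^sym(D₅,Γ_m) = 5·Υ_v(D₅,Γ_m) ≥ m`. -/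
theorem D5_not_expensive :
    (∀ (V : Type) [Fintype V] (Γ : SimpleGraph V), Γ.Connected →
      (∃ f : Fin 5 → V, IsCopy D5 Γ f) → IsEmpty (Γ ≃g (⊤ : SimpleGraph (Fin 5))) →
      upsilonSym D5 Γ < 5 * upsilon D5 Γ) ∧
    ¬ (∀ m : ℕ, ∃ (V : Type) (_ : Fintype V) (Γ : SimpleGraph V), Γ.Connected ∧
        upsilonSym D5 Γ = 5 * upsilon D5 Γ ∧ m ≤ upsilonSym D5 Γ) := by
  constructor
  · exact main_ineq
  · intro h
    obtain ⟨V, instV, Γ, hconn, heq, hm⟩ := h 6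
    by_cases hc : ∃ f : Fin 5 → V, IsCopy D5 Γ f
    · by_cases hk : Nonempty (Γ ≃g (⊤ : SimpleGraph (Fin 5)))
      · -- Γ ≃ K5 : then upsilonSym ≤ card V = 5 < 6
        obtain ⟨ψ⟩ := hk
        have hcard : Fintype.card V = 5 := by
          rw [Fintype.card_congr ψ.toEquiv, Fintype.card_fin]
        have hle : upsilonSym D5 Γ ≤ 5 := by
          have huniv := upsilonSym_le (Γ := Γ) (K := D5) (X := (Set.univ : Set V))
            Set.finite_univ (fun f _ => ⟨0, trivial⟩)
            (fun σ => by
              simp only [Set.image_univ]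
              exact Set.range_eq_univ.mpr σ.surjective)
          rw [Set.ncard_univ, Nat.card_eq_fintype_card, hcard] at huniv
          exact huniv
        omega
      · have := main_ineq V Γ hconn hc (not_nonempty_iff.mp hk)
        omega
    · -- no copy: upsilonSym = 0
      have hle : upsilonSym D5 Γ ≤ 0 := by
        have := upsilonSym_le (Γ := Γ) (K := D5) (X := (∅ : Set V)) Set.finite_empty
          (fun f hf => absurd ⟨f, hf⟩ hc) (fun σ => by simp)
        simpa using this
      omega
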